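/- Let ρ be a density matrix on ℂ^d and let Φ be a quantum channel on ℂ^d with Kraus operators {K_i}. Then I_ρ(Φ) ≤ Q_ρ(Φ) ≤ 2·V_ρ(Φ) − I_ρ(Φ). -/

import Mathlib

open Matrix
open scoped ComplexOrder

noncomputable section

def Matrix.PosSemidef.sqrt {m : Type*} [Fintype m] [DecidableEq m] {A : Matrix m m ℂ}
    (hA : A.PosSemidef) : Matrix m m ℂ :=
  (hA.1.eigenvectorUnitary : Matrix m m ℂ) *
    diagonal (fun i => ((Real.sqrt (hA.1.eigenvalues i) : ℝ) : ℂ)) *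
    (star hA.1.eigenvectorUnitary : Matrix m m ℂ)

/-- Variance of an operator `K` with respect to a state `ρ`:
`V_ρ(K) = ½ tr((K†K + KK†)ρ) − |tr(Kρ)|²`. -/
def opVar {d : ℕ} (ρ K : Matrix (Fin d) (Fin d) ℂ) : ℝ :=
  (((Kᴴ * K + K * Kᴴ) * ρ).trace).re / 2 - ‖(K * ρ).trace‖ ^ 2

/-- Variance of a channel with Kraus operators `K i`: `V_ρ(Φ) = Σ_i V_ρ(K_i)`. -/
def chanVar {d n : ℕ} (ρ : Matrix (Fin d) (Fin d) ℂ)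
    (K : Fin n → Matrix (Fin d) (Fin d) ℂ) : ℝ :=
  ∑ i, opVar ρ (K i)

/-- Wigner–Yanase skew information of a channel with Kraus operators `K i`:
`I_ρ(Φ) = ½ Σ_i ‖[√ρ, K_i]‖_F²`, where `√ρ` is the PSD square root of `ρ`. -/
def chanSkew {d n : ℕ} (ρ : Matrix (Fin d) (Fin d) ℂ) (hρ : ρ.PosSemidef)
    (K : Fin n → Matrix (Fin d) (Fin d) ℂ) : ℝ :=
  (1 / 2) * ∑ i,
    (((hρ.sqrt * K i - K i * hρ.sqrt)ᴴ * (hρ.sqrt * K i - K i * hρ.sqrt)).trace).re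

/-- Quantum uncertainty of a channel:
`Q_ρ(Φ) = √(V_ρ(Φ)² − (V_ρ(Φ) − I_ρ(Φ))²)`. -/
def chanQ {d n : ℕ} (ρ : Matrix (Fin d) (Fin d) ℂ) (hρ : ρ.PosSemidef)
    (K : Fin n → Matrix (Fin d) (Fin d) ℂ) : ℝ :=
  Real.sqrt ((chanVar ρ K) ^ 2 - (chanVar ρ K - chanSkew ρ hρ K) ^ 2)


lemma Matrix.PosSemidef.sqrt_mul_self {m : Type*} [Fintype m] [DecidableEq m] {A : Matrix m m ℂ}
    (hA : A.PosSemidef) : hA.sqrt * hA.sqrt = A := by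
  conv_rhs => rw [hA.1.spectral_theorem]
  have hU : (star hA.1.eigenvectorUnitary : Matrix m m ℂ) * hA.1.eigenvectorUnitary = 1 :=
    Unitary.star_mul_self_of_mem hA.1.eigenvectorUnitary.2
  simp only [Matrix.PosSemidef.sqrt, Unitary.conjStarAlgAut_apply]
  rw [show ∀ a b c d e f : Matrix m m ℂ, a * b * c * (d * e * f) = a * (b * (c * d) * e) * f by
    intros; simp only [Matrix.mul_assoc], hU, Matrix.mul_one, diagonal_mul_diagonal]
  refine congrArg (fun D => _ * D * _) (congrArg diagonal (funext fun i => ?_))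
  rw [← Complex.ofReal_mul, Real.mul_self_sqrt (hA.eigenvalues_nonneg i)]
  rfl

lemma Matrix.PosSemidef.posSemidef_sqrt {m : Type*} [Fintype m] [DecidableEq m] {A : Matrix m m ℂ}
    (hA : A.PosSemidef) : hA.sqrt.PosSemidef := by
  have h := (PosSemidef.diagonal (n := m) (R := ℂ)
    (d := fun i => ((Real.sqrt (hA.1.eigenvalues i) : ℝ) : ℂ))
    (fun i => by simp only [Pi.zero_apply]; exact_mod_cast Real.sqrt_nonneg _)).mul_mul_conjTranspose_same
    (hA.1.eigenvectorUnitary : Matrix m m ℂ)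
  simpa [Matrix.PosSemidef.sqrt, star_eq_conjTranspose] using h

open scoped InnerProductSpace

section Aux
variable {d n : ℕ}

private lemma trace_cts_re (A : Matrix (Fin d) (Fin d) ℂ) :
    ((Aᴴ * A).trace).re = ∑ j, ∑ i, Complex.normSq (A i j) := by
  simp [Matrix.trace, Matrix.mul_apply, Matrix.diag, Complex.re_sum,
    Matrix.conjTranspose_apply, Complex.normSq_eq_conj_mul_self, Complex.mul_re,
    Complex.normSq_apply]

private lemma trace_cts_nonneg (A : Matrix (Fin d) (Fin d) ℂ) :
    0 ≤ ((Aᴴ * A).trace).re := by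
  rw [trace_cts_re]
  exact Finset.sum_nonneg fun j _ => Finset.sum_nonneg fun i _ => Complex.normSq_nonneg _

private lemma cs_trace (A B : Matrix (Fin d) (Fin d) ℂ) :
    ‖(Aᴴ * B).trace‖ ^ 2 ≤ ((Aᴴ * A).trace).re * ((Bᴴ * B).trace).re := by
  let v : Matrix (Fin d) (Fin d) ℂ → EuclideanSpace ℂ (Fin d × Fin d) :=
    fun M => WithLp.toLp 2 (fun p : Fin d × Fin d => M p.1 p.2)
  have hinner : ∀ M N : Matrix (Fin d) (Fin d) ℂ,
      ⟪v M, v N⟫_ℂ = ((Mᴴ * N).trace) := by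
    intro M N
    rw [PiLp.inner_apply]
    simp only [RCLike.inner_apply]
    rw [Fintype.sum_prod_type]
    rw [Finset.sum_comm]
    simp [Matrix.trace, Matrix.mul_apply, Matrix.diag, Matrix.conjTranspose_apply, v]
    exact Finset.sum_congr rfl fun _ _ => Finset.sum_congr rfl fun _ _ => mul_comm _ _
  have hcs := norm_inner_le_norm (𝕜 := ℂ) (v A) (v B)
  have h2 : ‖(⟪v A, v B⟫_ℂ)‖ ^ 2 ≤ ‖v A‖ ^ 2 * ‖v B‖ ^ 2 := by
    rw [← mul_pow]
    exact pow_le_pow_left₀ (norm_nonneg _) hcs 2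
  have hA : ‖v A‖ ^ 2 = ((Aᴴ * A).trace).re := by
    rw [← inner_self_eq_norm_sq (𝕜 := ℂ), hinner]; rfl
  have hB : ‖v B‖ ^ 2 = ((Bᴴ * B).trace).re := by
    rw [← inner_self_eq_norm_sq (𝕜 := ℂ), hinner]; rfl
  rw [hA, hB] at h2
  rwa [hinner] at h2

private lemma key_cs (ρ : Matrix (Fin d) (Fin d) ℂ) (hρ : ρ.PosSemidef) (htr : ρ.trace = 1)
    (K : Matrix (Fin d) (Fin d) ℂ) :
    ‖(K * ρ).trace‖ ^ 2 ≤ ((hρ.sqrt * Kᴴ * hρ.sqrt * K).trace).re := by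
  set s := hρ.sqrt with hsdef
  have hs : s.PosSemidef := hρ.posSemidef_sqrt
  have hss : s * s = ρ := hρ.sqrt_mul_self
  have hsh : sᴴ = s := hs.1
  set t := hs.sqrt with htdef
  have htt : t * t = s := hs.sqrt_mul_self
  have hth : tᴴ = t := hs.posSemidef_sqrt.1
  set M := t * K * t with hM
  have h1 : (M * s).trace = (K * ρ).trace := by
    rw [show M * s = t * (K * t * s) by rw [hM]; noncomm_ring,
       trace_mul_comm, show K * t * s * t = K * ρ by rw [← hss, ← htt]; noncomm_ring]
  have h2 : (M * Mᴴ).trace = (s * Kᴴ * s * K).trace := by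
    have hMh : Mᴴ = t * Kᴴ * t := by simp [hM, conjTranspose_mul, hth, mul_assoc]
    rw [hMh, show M * (t * Kᴴ * t) = t * (K * (t * t) * Kᴴ * t) by rw [hM]; noncomm_ring,
      trace_mul_comm, htt,
      show K * s * Kᴴ * t * t = K * (s * Kᴴ * s) by
        rw [mul_assoc (K * s * Kᴴ) t t, htt]; noncomm_ring,
      trace_mul_comm]
  have hcs := cs_trace Mᴴ s
  rw [conjTranspose_conjTranspose, hsh, hss, htr] at hcs
  simp only [Complex.one_re, mul_one] at hcs
  rw [h1, h2] at hcs
  exact hcs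

private lemma skew_expand (ρ : Matrix (Fin d) (Fin d) ℂ) (hρ : ρ.PosSemidef)
    (K : Matrix (Fin d) (Fin d) ℂ) :
    ((hρ.sqrt * K - K * hρ.sqrt)ᴴ * (hρ.sqrt * K - K * hρ.sqrt)).trace =
      ((Kᴴ * K + K * Kᴴ) * ρ).trace - 2 * (hρ.sqrt * Kᴴ * hρ.sqrt * K).trace := by
  set s := hρ.sqrt with hsdef
  have hss : s * s = ρ := hρ.sqrt_mul_self
  have hsh : sᴴ = s := hρ.posSemidef_sqrt.1
  have hct : (s * K - K * s)ᴴ = Kᴴ * s - s * Kᴴ := by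
    simp [conjTranspose_sub, conjTranspose_mul, hsh]
  have expand : (Kᴴ * s - s * Kᴴ) * (s * K - K * s) =
      (Kᴴ * (s * (s * K))) - (Kᴴ * (s * (K * s))) - (s * (Kᴴ * (s * K)))
        + (s * (Kᴴ * (K * s))) := by noncomm_ring
  have T1 : (Kᴴ * (s * (s * K))).trace = (K * Kᴴ * ρ).trace := by
    rw [show Kᴴ * (s * (s * K)) = Kᴴ * ρ * K by rw [← hss]; noncomm_ring,
        trace_mul_comm, show K * (Kᴴ * ρ) = K * Kᴴ * ρ by noncomm_ring]
  have T2 : (s * (Kᴴ * (K * s))).trace = (Kᴴ * K * ρ).trace := by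
    rw [trace_mul_comm, show Kᴴ * (K * s) * s = Kᴴ * K * ρ by rw [← hss]; noncomm_ring]
  have T3 : (Kᴴ * (s * (K * s))).trace = (s * Kᴴ * s * K).trace := by
    rw [show Kᴴ * (s * (K * s)) = Kᴴ * s * K * s by noncomm_ring, trace_mul_comm,
        show s * (Kᴴ * s * K) = s * Kᴴ * s * K by noncomm_ring]
  have T4 : (s * (Kᴴ * (s * K))).trace = (s * Kᴴ * s * K).trace := by
    rw [show s * (Kᴴ * (s * K)) = s * Kᴴ * s * K by noncomm_ring]
  rw [hct, expand]
  simp only [Matrix.trace_add, Matrix.trace_sub]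
  rw [T1, T2, T3, T4, add_mul, Matrix.trace_add]
  ring

private lemma per_term (ρ : Matrix (Fin d) (Fin d) ℂ) (hρ : ρ.PosSemidef)
    (htr : ρ.trace = 1) (K : Matrix (Fin d) (Fin d) ℂ) :
    (1 / 2) * (((hρ.sqrt * K - K * hρ.sqrt)ᴴ * (hρ.sqrt * K - K * hρ.sqrt)).trace).re
      ≤ opVar ρ K := by
  have hk := key_cs ρ hρ htr K
  rw [skew_expand ρ hρ K]
  have h2re : ∀ x : ℂ, ((2 : ℂ) * x).re = 2 * x.re := by
    intro x; simp [Complex.mul_re]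
  rw [Complex.sub_re, h2re, opVar]
  linarith

private lemma skew_nonneg (ρ : Matrix (Fin d) (Fin d) ℂ) (hρ : ρ.PosSemidef)
    (K : Fin n → Matrix (Fin d) (Fin d) ℂ) : 0 ≤ chanSkew ρ hρ K := by
  rw [chanSkew]
  exact mul_nonneg (by norm_num) (Finset.sum_nonneg fun i _ => trace_cts_nonneg _)

private lemma skew_le_var (ρ : Matrix (Fin d) (Fin d) ℂ) (hρ : ρ.PosSemidef)
    (htr : ρ.trace = 1) (K : Fin n → Matrix (Fin d) (Fin d) ℂ) :
    chanSkew ρ hρ K ≤ chanVar ρ K := by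
  rw [chanSkew, chanVar, Finset.mul_sum]
  exact Finset.sum_le_sum fun i _ => per_term ρ hρ htr (K i)

end Aux

/-- `I_ρ(Φ) ≤ Q_ρ(Φ) ≤ 2 V_ρ(Φ) − I_ρ(Φ)`. -/
theorem stmt_7 {d n : ℕ}
    (ρ : Matrix (Fin d) (Fin d) ℂ) (hρ : ρ.PosSemidef) (htr : ρ.trace = 1)
    (K : Fin n → Matrix (Fin d) (Fin d) ℂ) (hK : ∑ i, (K i)ᴴ * K i = 1) :
    chanSkew ρ hρ K ≤ chanQ ρ hρ K ∧
      chanQ ρ hρ K ≤ 2 * chanVar ρ K - chanSkew ρ hρ K := by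
  unfold chanQ
  set I := chanSkew ρ hρ K with hI
  set V := chanVar ρ K with hV
  have hI0 : 0 ≤ I := skew_nonneg ρ hρ K
  have hIV : I ≤ V := skew_le_var ρ hρ htr K
  constructor
  · calc I = Real.sqrt (I ^ 2) := (Real.sqrt_sq hI0).symm
      _ ≤ Real.sqrt (V ^ 2 - (V - I) ^ 2) := Real.sqrt_le_sqrt (by nlinarith)
  · calc Real.sqrt (V ^ 2 - (V - I) ^ 2) ≤ Real.sqrt ((2 * V - I) ^ 2) :=
        Real.sqrt_le_sqrt (by nlinarith)
      _ = 2 * V - I := Real.sqrt_sq (by linarith)
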